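/- Let σ* = (x*, y*) be a Nash equilibrium of the game given by U, let μ > 0, let σ^r ∈ Δ^n × Δ^m be a reference profile, and let σ̂ = (x̂, ŷ) be a saddle point of the corresponding SCCP. If σ^r ≠ σ̂ and σ̂ ≠ σ*, then ‖σ* − σ^r‖₂ − ‖σ* − σ̂‖₂ ≥ ‖σ^r − σ̂‖₂² / (‖σ* − σ^r‖₂ + ‖σ* − σ̂‖₂). -/
import Mathlib


open Finset

/-- Squared Euclidean norm of a vector. -/
noncomputable def sqnorm {k : ℕ} (v : Fin k → ℝ) : ℝ := ∑ i, (v i) ^ 2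

/-- Euclidean norm of a concatenated profile vector in ℝ^(k+l). -/
noncomputable def pnorm {k l : ℕ} (v : Fin k → ℝ) (w : Fin l → ℝ) : ℝ :=
  Real.sqrt (sqnorm v + sqnorm w)

/-- Bilinear payoff xᵀUy. -/
def payoff {k l : ℕ} (U : Matrix (Fin k) (Fin l) ℝ) (x : Fin k → ℝ) (y : Fin l → ℝ) : ℝ :=
  ∑ i, ∑ j, x i * U i j * y j

/-- Regularized SCCP objective G(x,y) = -xᵀUy + μ/2 ‖x - xʳ‖² - μ/2 ‖y - yʳ‖². -/
noncomputable def sccpObj {k l : ℕ} (U : Matrix (Fin k) (Fin l) ℝ) (μ : ℝ)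
    (xr : Fin k → ℝ) (yr : Fin l → ℝ) (x : Fin k → ℝ) (y : Fin l → ℝ) : ℝ :=
  -(payoff U x y) + μ / 2 * sqnorm (x - xr) - μ / 2 * sqnorm (y - yr)

/-- (x̂, ŷ) is a saddle point of the SCCP with weight μ and reference (xr, yr). -/
def IsSaddle {k l : ℕ} (U : Matrix (Fin k) (Fin l) ℝ) (μ : ℝ)
    (xr : Fin k → ℝ) (yr : Fin l → ℝ) (xh : Fin k → ℝ) (yh : Fin l → ℝ) : Prop :=
  xh ∈ stdSimplex ℝ (Fin k) ∧ yh ∈ stdSimplex ℝ (Fin l) ∧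
  (∀ y ∈ stdSimplex ℝ (Fin l), sccpObj U μ xr yr xh y ≤ sccpObj U μ xr yr xh yh) ∧
  (∀ x ∈ stdSimplex ℝ (Fin k), sccpObj U μ xr yr xh yh ≤ sccpObj U μ xr yr x yh)

/-- (x*, y*) is a Nash equilibrium of the zero-sum game with payoff matrix U. -/
def IsNash {k l : ℕ} (U : Matrix (Fin k) (Fin l) ℝ)
    (xs : Fin k → ℝ) (ys : Fin l → ℝ) : Prop :=
  xs ∈ stdSimplex ℝ (Fin k) ∧ ys ∈ stdSimplex ℝ (Fin l) ∧
  (∀ x ∈ stdSimplex ℝ (Fin k), payoff U x ys ≤ payoff U xs ys) ∧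
  (∀ y ∈ stdSimplex ℝ (Fin l), payoff U xs ys ≤ payoff U xs y)

/-- Exploitability ε(σ) = max_{x'} x'ᵀUy - min_{y'} xᵀUy'. -/
noncomputable def exploit {k l : ℕ} (U : Matrix (Fin k) (Fin l) ℝ)
    (x : Fin k → ℝ) (y : Fin l → ℝ) : ℝ :=
  sSup ((fun x' => payoff U x' y) '' stdSimplex ℝ (Fin k)) -
  sInf ((fun y' => payoff U x y') '' stdSimplex ℝ (Fin l))

/-- Transformed loss for the x-player: ℓ_x = -Uy + μ(x - xʳ). -/
noncomputable def lossX {k l : ℕ} (U : Matrix (Fin k) (Fin l) ℝ) (μ : ℝ)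
    (xr : Fin k → ℝ) (x : Fin k → ℝ) (y : Fin l → ℝ) : Fin k → ℝ :=
  fun i => -(∑ j, U i j * y j) + μ * (x i - xr i)

/-- Transformed loss for the y-player: ℓ_y = Uᵀx + μ(y - yʳ). -/
noncomputable def lossY {k l : ℕ} (U : Matrix (Fin k) (Fin l) ℝ) (μ : ℝ)
    (yr : Fin l → ℝ) (x : Fin k → ℝ) (y : Fin l → ℝ) : Fin l → ℝ :=
  fun j => (∑ i, U i j * x i) + μ * (y j - yr j)

/-- Immediate regret r = ⟨ℓ, p⟩·𝟏 - ℓ. -/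
noncomputable def imRegret {k : ℕ} (ℓ : Fin k → ℝ) (p : Fin k → ℝ) : Fin k → ℝ :=
  fun i => (∑ i', ℓ i' * p i') - ℓ i

lemma sqnorm_nonneg' {k : ℕ} (v : Fin k → ℝ) : 0 ≤ sqnorm v :=
  Finset.sum_nonneg fun _ _ => sq_nonneg _

lemma sqnorm_pos' {k : ℕ} {v : Fin k → ℝ} (hv : v ≠ 0) : 0 < sqnorm v := by
  obtain ⟨i, hi⟩ := Function.ne_iff.1 hv
  have h1 : (0:ℝ) < v i ^ 2 := by
    have : v i ≠ 0 := hi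
    positivity
  have h2 : v i ^ 2 ≤ sqnorm v := by
    unfold sqnorm
    exact Finset.single_le_sum (f := fun j => v j ^ 2) (fun j _ => sq_nonneg _)
      (Finset.mem_univ i)
  linarith

lemma sqnorm_sub_comm' {k : ℕ} (a b : Fin k → ℝ) : sqnorm (a - b) = sqnorm (b - a) := by
  refine Finset.sum_congr rfl fun i _ => ?_
  simp only [Pi.sub_apply]
  ring

/-- Strong-convexity lower bound at the constrained minimizer of a quadratic. -/
lemma quad_min {k : ℕ} (μ : ℝ) (hμ : 0 < μ) (c r xh : Fin k → ℝ)
    (hxh : xh ∈ stdSimplex ℝ (Fin k))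
    (hmin : ∀ x ∈ stdSimplex ℝ (Fin k),
      (∑ i, c i * xh i) + μ/2 * sqnorm (xh - r) ≤ (∑ i, c i * x i) + μ/2 * sqnorm (x - r))
    (x : Fin k → ℝ) (hx : x ∈ stdSimplex ℝ (Fin k)) :
    (∑ i, c i * xh i) + μ/2 * sqnorm (xh - r) + μ/2 * sqnorm (x - xh)
      ≤ (∑ i, c i * x i) + μ/2 * sqnorm (x - r) := by
  set d : Fin k → ℝ := x - xh with hd
  set s : ℝ := sqnorm (x - xh) with hs
  set g : ℝ := (∑ i, c i * d i) + μ * ∑ i, d i * (xh i - r i) with hg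
  have hdi : ∀ i, d i = x i - xh i := fun i => rfl
  -- exact quadratic expansion along the segment
  have expand : ∀ t : ℝ,
      (∑ i, c i * (xh i + t * d i)) + μ/2 * (∑ i, (xh i + t * d i - r i)^2)
      = ((∑ i, c i * xh i) + μ/2 * sqnorm (xh - r)) + t * g + t^2 * (μ/2) * s := by
    intro t
    have e1 : (∑ i, c i * (xh i + t * d i)) + μ/2 * (∑ i, (xh i + t * d i - r i)^2)
        = ∑ i, (c i * xh i + μ/2 * ((xh i - r i)^2)
            + t * (c i * d i) + (t * μ) * (d i * (xh i - r i))
            + (t^2 * (μ/2)) * ((d i)^2)) := by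
      rw [Finset.mul_sum, ← Finset.sum_add_distrib]
      refine Finset.sum_congr rfl fun i _ => ?_
      ring
    rw [e1]
    rw [Finset.sum_add_distrib, Finset.sum_add_distrib, Finset.sum_add_distrib,
      Finset.sum_add_distrib]
    rw [← Finset.mul_sum, ← Finset.mul_sum, ← Finset.mul_sum, ← Finset.mul_sum]
    simp only [hg, hs, sqnorm, hd, Pi.sub_apply]
    ring
  have hs0 : 0 ≤ s := sqnorm_nonneg' _
  -- the first-order term is nonnegative
  have hg0 : 0 ≤ g := by
    by_contra hgneg
    push_neg at hgneg
    have hsz : 0 < s := by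
      rcases eq_or_ne (x - xh) 0 with h0 | h0
      · exfalso
        have hd0 : d = 0 := hd.trans h0
        have hg00 : g = 0 := by
          simp only [hg, hd0]
          simp
        linarith
      · exact sqnorm_pos' h0
    set t : ℝ := min 1 (-g / (μ * s)) with ht
    have hgms : 0 < -g / (μ * s) := by
      apply div_pos (by linarith) (by positivity)
    have ht0 : 0 < t := lt_min one_pos hgms
    have ht1 : t ≤ 1 := min_le_left _ _
    have ht2 : t ≤ -g / (μ * s) := min_le_right _ _
    -- the shifted point is in the simplex
    have hxt : xh + t • d ∈ stdSimplex ℝ (Fin k) := by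
      have hc := (convex_stdSimplex ℝ (Fin k)) hxh hx (by linarith : (0:ℝ) ≤ 1 - t)
        (le_of_lt ht0) (by ring)
      have heq : xh + t • d = (1 - t) • xh + t • x := by
        funext i
        simp only [Pi.add_apply, Pi.smul_apply, smul_eq_mul, hdi]
        ring
      rwa [heq]
    have h1 := hmin (xh + t • d) hxt
    have h2 : (∑ i, c i * (xh + t • d) i) + μ/2 * sqnorm ((xh + t • d) - r)
        = ((∑ i, c i * xh i) + μ/2 * sqnorm (xh - r)) + t * g + t^2 * (μ/2) * s := by
      have ea : (∑ i, c i * (xh + t • d) i) = ∑ i, c i * (xh i + t * d i) := by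
        refine Finset.sum_congr rfl fun i _ => ?_
        simp [smul_eq_mul]
      have eb : sqnorm ((xh + t • d) - r) = ∑ i, (xh i + t * d i - r i)^2 := by
        unfold sqnorm
        refine Finset.sum_congr rfl fun i _ => ?_
        simp [smul_eq_mul]
      rw [ea, eb, expand t]
    rw [h2] at h1
    have h3 : 0 ≤ t * g + t^2 * (μ/2) * s := by linarith
    have h4 : t * μ * s ≤ -g := by
      rw [div_eq_mul_inv] at ht2
      have : t * (μ * s) ≤ -g := by
        rw [← le_div_iff₀ (by positivity : (0:ℝ) < μ * s)]
        rw [div_eq_mul_inv]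
        exact ht2
      linarith [this]
    nlinarith [ht0, h3, h4]
  -- conclude using the expansion at t = 1
  have hfin := expand 1
  have e2 : (∑ i, c i * (xh i + 1 * d i)) = ∑ i, c i * x i := by
    refine Finset.sum_congr rfl fun i _ => ?_
    rw [hdi]; ring
  have e3 : (∑ i, (xh i + 1 * d i - r i)^2) = sqnorm (x - r) := by
    refine Finset.sum_congr rfl fun i _ => ?_
    simp only [Pi.sub_apply, hdi]
    ring
  rw [e2, e3] at hfin
  nlinarith [hfin, hg0]

lemma payoff_as_x {k l : ℕ} (U : Matrix (Fin k) (Fin l) ℝ) (x : Fin k → ℝ) (y : Fin l → ℝ) :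
    payoff U x y = ∑ i, (∑ j, U i j * y j) * x i := by
  unfold payoff
  refine Finset.sum_congr rfl fun i _ => ?_
  rw [Finset.sum_mul]
  refine Finset.sum_congr rfl fun j _ => ?_
  ring

lemma payoff_as_y {k l : ℕ} (U : Matrix (Fin k) (Fin l) ℝ) (x : Fin k → ℝ) (y : Fin l → ℝ) :
    payoff U x y = ∑ j, (∑ i, x i * U i j) * y j := by
  unfold payoff
  rw [Finset.sum_comm]
  refine Finset.sum_congr rfl fun j _ => ?_
  rw [Finset.sum_mul]

/-- Quantified decrease of the distance to the NE from reference to saddle point. -/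
theorem saddle_distance_decrease
    {n m : ℕ} (hn : 0 < n) (hm : 0 < m)
    (U : Matrix (Fin n) (Fin m) ℝ) (μ : ℝ) (hμ : 0 < μ)
    (xs : Fin n → ℝ) (ys : Fin m → ℝ) (hNE : IsNash U xs ys)
    (xr : Fin n → ℝ) (yr : Fin m → ℝ)
    (hxr : xr ∈ stdSimplex ℝ (Fin n)) (hyr : yr ∈ stdSimplex ℝ (Fin m))
    (xh : Fin n → ℝ) (yh : Fin m → ℝ)
    (hsad : IsSaddle U μ xr yr xh yh)
    (hne1 : ¬(xr = xh ∧ yr = yh)) (hne2 : ¬(xh = xs ∧ yh = ys)) :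
    pnorm (xs - xr) (ys - yr) - pnorm (xs - xh) (ys - yh) ≥
      (sqnorm (xr - xh) + sqnorm (yr - yh)) /
        (pnorm (xs - xr) (ys - yr) + pnorm (xs - xh) (ys - yh)) := by
  obtain ⟨hxs, hys, hNE1, hNE2⟩ := hNE
  obtain ⟨hxh, hyh, hsad1, hsad2⟩ := hsad
  -- x-player strong convexity bound at xs
  set cx : Fin n → ℝ := fun i => -(∑ j, U i j * yh j) with hcx
  have hPx : ∀ x : Fin n → ℝ, ∑ i, cx i * x i = -(payoff U x yh) := by
    intro x
    rw [payoff_as_x, ← Finset.sum_neg_distrib]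
    refine Finset.sum_congr rfl fun i _ => ?_
    simp [hcx]
  have hminx : ∀ x ∈ stdSimplex ℝ (Fin n),
      (∑ i, cx i * xh i) + μ/2 * sqnorm (xh - xr) ≤
      (∑ i, cx i * x i) + μ/2 * sqnorm (x - xr) := by
    intro x hx
    have := hsad2 x hx
    unfold sccpObj at this
    rw [hPx, hPx]
    linarith
  have hXineq := quad_min μ hμ cx xr xh hxh hminx xs hxs
  rw [hPx, hPx] at hXineq
  -- y-player strong convexity bound at ys
  set cy : Fin m → ℝ := fun j => ∑ i, xh i * U i j with hcy
  have hPy : ∀ y : Fin m → ℝ, ∑ j, cy j * y j = payoff U xh y := by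
    intro y
    rw [payoff_as_y]
  have hminy : ∀ y ∈ stdSimplex ℝ (Fin m),
      (∑ j, cy j * yh j) + μ/2 * sqnorm (yh - yr) ≤
      (∑ j, cy j * y j) + μ/2 * sqnorm (y - yr) := by
    intro y hy
    have := hsad1 y hy
    unfold sccpObj at this
    rw [hPy, hPy]
    linarith
  have hYineq := quad_min μ hμ cy yr yh hyh hminy ys hys
  rw [hPy, hPy] at hYineq
  -- Nash inequalities
  have hN1 : payoff U xh ys ≤ payoff U xs ys := hNE1 xh hxh
  have hN2 : payoff U xs ys ≤ payoff U xs yh := hNE2 yh hyh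
  -- combine: B2 + C2 ≤ A2
  set A2 : ℝ := sqnorm (xs - xr) + sqnorm (ys - yr) with hA2
  set B2 : ℝ := sqnorm (xs - xh) + sqnorm (ys - yh) with hB2
  set C2 : ℝ := sqnorm (xr - xh) + sqnorm (yr - yh) with hC2
  have hkey : B2 + C2 ≤ A2 := by
    have hc1 : sqnorm (xr - xh) = sqnorm (xh - xr) := sqnorm_sub_comm' _ _
    have hc2 : sqnorm (yr - yh) = sqnorm (yh - yr) := sqnorm_sub_comm' _ _
    have hmu2 : (0:ℝ) < μ/2 := by linarith
    simp only [hA2, hB2, hC2, hc1, hc2]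
    nlinarith [hXineq, hYineq, hN1, hN2]
  have hA2nn : 0 ≤ A2 := by
    have := sqnorm_nonneg' (xs - xr); have := sqnorm_nonneg' (ys - yr); linarith
  have hB2pos : 0 < B2 := by
    have h1 := sqnorm_nonneg' (xs - xh)
    have h2 := sqnorm_nonneg' (ys - yh)
    rcases not_and_or.1 hne2 with h | h
    · have : xs - xh ≠ 0 := by
        intro hc
        exact h (by funext i; have := congrFun hc i; simp only [Pi.sub_apply, Pi.zero_apply] at this; linarith)
      have := sqnorm_pos' this
      simp only [hB2]; linarith
    · have : ys - yh ≠ 0 := by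
        intro hc
        exact h (by funext j; have := congrFun hc j; simp only [Pi.sub_apply, Pi.zero_apply] at this; linarith)
      have := sqnorm_pos' this
      simp only [hB2]; linarith
  have hC2nn : 0 ≤ C2 := by
    have := sqnorm_nonneg' (xr - xh); have := sqnorm_nonneg' (yr - yh); linarith
  -- final algebra with square roots
  set a : ℝ := pnorm (xs - xr) (ys - yr) with ha
  set b : ℝ := pnorm (xs - xh) (ys - yh) with hb
  have ha2 : a^2 = A2 := Real.sq_sqrt hA2nn
  have hb2 : b^2 = B2 := Real.sq_sqrt (le_of_lt hB2pos)
  have hann : 0 ≤ a := Real.sqrt_nonneg _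
  have hbpos : 0 < b := Real.sqrt_pos.2 hB2pos
  rw [ge_iff_le, div_le_iff₀ (by linarith : 0 < a + b)]
  nlinarith [hkey, ha2, hb2]
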